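/- Let F be a complex Hilbert space, P an orthogonal projection and U a unitary on F, and consider on H²⊗F the commuting pair of isometries V₁ = I⊗P^⊥U + M_z⊗PU and V₂ = I⊗U*P + M_z⊗U*P^⊥. Then V₂*V₁ − V₁V₂* = (I − M_zM_z*) ⊗ PUP^⊥U; consequently (V₁,V₂) is doubly commutative (V₂V₁* = V₁*V₂) if and only if PUP^⊥ = 0. -/

import Mathlib

set_option maxHeartbeats 1000000


open ContinuousLinearMap
open scoped InnerProductSpace

lemma aux_single {F : Type*} [NormedAddCommGroup F] [InnerProductSpace ℂ F] [CompleteSpace F]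
    (A B : F →L[ℂ] F) (W : lp (fun _ : ℕ => F) 2 →L[ℂ] lp (fun _ : ℕ => F) 2)
    (hW0 : ∀ f, (W f : ∀ _ : ℕ, F) 0 = A ((f : ∀ _ : ℕ, F) 0))
    (hWn : ∀ f, ∀ n : ℕ, (W f : ∀ _ : ℕ, F) (n + 1)
      = A ((f : ∀ _ : ℕ, F) (n + 1)) + B ((f : ∀ _ : ℕ, F) n)) (n : ℕ) (x : F) :
    W (lp.single 2 n x) = lp.single 2 n (A x) + lp.single 2 (n + 1) (B x) := by
  apply lp.ext
  funext k
  have hco : ((lp.single 2 n (A x) + lp.single 2 (n + 1) (B x) : lp (fun _ : ℕ => F) 2)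
      : ∀ _ : ℕ, F) k = (lp.single 2 n (A x) : ∀ _ : ℕ, F) k
        + (lp.single 2 (n + 1) (B x) : ∀ _ : ℕ, F) k := by
    rw [lp.coeFn_add]; rfl
  rw [hco]
  cases k with
  | zero =>
    rw [hW0]
    cases n with
    | zero => simp [lp.single_apply_self, lp.single_apply_ne]
    | succ m => simp [lp.single_apply_ne]
  | succ j =>
    rw [hWn]
    rcases eq_or_ne (j + 1) n with h1 | h1
    · subst h1
      simp [lp.single_apply_self, lp.single_apply_ne]
    · rcases eq_or_ne j n with h2 | h2
      · subst h2
        simp [lp.single_apply_self, lp.single_apply_ne, h1]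
      · have h3 : j + 1 ≠ n + 1 := by omega
        simp [lp.single_apply_ne, h1, h2, h3]

lemma aux_adjoint {F : Type*} [NormedAddCommGroup F] [InnerProductSpace ℂ F] [CompleteSpace F]
    (A B : F →L[ℂ] F) (W : lp (fun _ : ℕ => F) 2 →L[ℂ] lp (fun _ : ℕ => F) 2)
    (hW0 : ∀ f, (W f : ∀ _ : ℕ, F) 0 = A ((f : ∀ _ : ℕ, F) 0))
    (hWn : ∀ f, ∀ n : ℕ, (W f : ∀ _ : ℕ, F) (n + 1)
      = A ((f : ∀ _ : ℕ, F) (n + 1)) + B ((f : ∀ _ : ℕ, F) n))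
    (f : lp (fun _ : ℕ => F) 2) (n : ℕ) :
    (adjoint W f : ∀ _ : ℕ, F) n
      = adjoint A ((f : ∀ _ : ℕ, F) n) + adjoint B ((f : ∀ _ : ℕ, F) (n + 1)) := by
  apply ext_inner_left ℂ
  intro x
  calc ⟪x, (adjoint W f : ∀ _ : ℕ, F) n⟫_ℂ
      = ⟪lp.single 2 n x, adjoint W f⟫_ℂ := (lp.inner_single_left (𝕜 := ℂ) n x (adjoint W f)).symm
    _ = ⟪W (lp.single 2 n x), f⟫_ℂ := adjoint_inner_right W _ _
    _ = ⟪lp.single 2 n (A x) + lp.single 2 (n + 1) (B x), f⟫_ℂ := by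
        rw [aux_single A B W hW0 hWn n x]
    _ = ⟪A x, (f : ∀ _ : ℕ, F) n⟫_ℂ + ⟪B x, (f : ∀ _ : ℕ, F) (n + 1)⟫_ℂ := by
        rw [inner_add_left, lp.inner_single_left, lp.inner_single_left]
    _ = ⟪x, adjoint A ((f : ∀ _ : ℕ, F) n) + adjoint B ((f : ∀ _ : ℕ, F) (n + 1))⟫_ℂ := by
        rw [inner_add_right, ← adjoint_inner_right, ← adjoint_inner_right]

theorem stmt_11 {F : Type*} [NormedAddCommGroup F] [InnerProductSpace ℂ F] [CompleteSpace F]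
    (P U : F →L[ℂ] F)
    (hP_idem : P ∘L P = P) (hP_sa : IsSelfAdjoint P)
    (hU₁ : adjoint U ∘L U = 1) (hU₂ : U ∘L adjoint U = 1)
    (V₁ V₂ : lp (fun _ : ℕ => F) 2 →L[ℂ] lp (fun _ : ℕ => F) 2)
    -- V₁ = I ⊗ P^⊥U + M_z ⊗ PU :
    (hV₁0 : ∀ f, (V₁ f : ∀ _ : ℕ, F) 0 = (1 - P) (U ((f : ∀ _ : ℕ, F) 0)))
    (hV₁n : ∀ f, ∀ n : ℕ, (V₁ f : ∀ _ : ℕ, F) (n + 1)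
      = (1 - P) (U ((f : ∀ _ : ℕ, F) (n + 1))) + P (U ((f : ∀ _ : ℕ, F) n)))
    -- V₂ = I ⊗ U*P + M_z ⊗ U*P^⊥ :
    (hV₂0 : ∀ f, (V₂ f : ∀ _ : ℕ, F) 0 = adjoint U (P ((f : ∀ _ : ℕ, F) 0)))
    (hV₂n : ∀ f, ∀ n : ℕ, (V₂ f : ∀ _ : ℕ, F) (n + 1)
      = adjoint U (P ((f : ∀ _ : ℕ, F) (n + 1)))
        + adjoint U ((1 - P) ((f : ∀ _ : ℕ, F) n))) :
    -- V₂*V₁ − V₁V₂* = (I − M_z M_z*) ⊗ (P U P^⊥ U) :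
    (∀ f, ((adjoint V₂ ∘L V₁ - V₁ ∘L adjoint V₂) f : ∀ _ : ℕ, F) 0
        = P (U ((1 - P) (U ((f : ∀ _ : ℕ, F) 0)))) ∧
      ∀ n : ℕ, ((adjoint V₂ ∘L V₁ - V₁ ∘L adjoint V₂) f : ∀ _ : ℕ, F) (n + 1) = 0) ∧
    -- consequently (V₁, V₂) is doubly commutative iff P U P^⊥ = 0 :
    (V₂ ∘L adjoint V₁ = adjoint V₁ ∘L V₂ ↔ P ∘L U ∘L (1 - P) = 0) := by
  have hPadj : adjoint P = P := isSelfAdjoint_iff'.mp hP_sa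
  have hadj1 : adjoint (1 : F →L[ℂ] F) = 1 := by
    rw [ContinuousLinearMap.one_def]; exact adjoint_id
  have hQadj : adjoint (1 - P : F →L[ℂ] F) = 1 - P := by rw [map_sub, hadj1, hPadj]
  -- formulas for adjoints
  have hA1 : ∀ f, (V₁ f : ∀ _ : ℕ, F) 0 = ((1 - P) ∘L U) ((f : ∀ _ : ℕ, F) 0) := hV₁0
  have hB1 : ∀ f, ∀ n : ℕ, (V₁ f : ∀ _ : ℕ, F) (n + 1)
      = ((1 - P) ∘L U) ((f : ∀ _ : ℕ, F) (n + 1)) + (P ∘L U) ((f : ∀ _ : ℕ, F) n) := hV₁n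
  have hA2 : ∀ f, (V₂ f : ∀ _ : ℕ, F) 0 = (adjoint U ∘L P) ((f : ∀ _ : ℕ, F) 0) := hV₂0
  have hB2 : ∀ f, ∀ n : ℕ, (V₂ f : ∀ _ : ℕ, F) (n + 1)
      = (adjoint U ∘L P) ((f : ∀ _ : ℕ, F) (n + 1))
        + (adjoint U ∘L (1 - P)) ((f : ∀ _ : ℕ, F) n) := hV₂n
  have hadjV₁ : ∀ f, ∀ n : ℕ, (adjoint V₁ f : ∀ _ : ℕ, F) n
      = adjoint U ((1 - P) ((f : ∀ _ : ℕ, F) n))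
        + adjoint U (P ((f : ∀ _ : ℕ, F) (n + 1))) := by
    intro f n
    have := aux_adjoint ((1 - P) ∘L U) (P ∘L U) V₁ hA1 hB1 f n
    simpa [adjoint_comp, hPadj, hQadj, hadj1] using this
  have hadjV₂ : ∀ f, ∀ n : ℕ, (adjoint V₂ f : ∀ _ : ℕ, F) n
      = P (U ((f : ∀ _ : ℕ, F) n))
        + (1 - P) (U ((f : ∀ _ : ℕ, F) (n + 1))) := by
    intro f n
    have := aux_adjoint (adjoint U ∘L P) (adjoint U ∘L (1 - P)) V₂ hA2 hB2 f n
    simpa [adjoint_comp, adjoint_adjoint, hPadj, hQadj, hadj1] using this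
  have hsub : ∀ (X Y : lp (fun _ : ℕ => F) 2 →L[ℂ] lp (fun _ : ℕ => F) 2) f (k : ℕ),
      (((X - Y) f : lp (fun _ : ℕ => F) 2) : ∀ _ : ℕ, F) k
        = (X f : ∀ _ : ℕ, F) k - (Y f : ∀ _ : ℕ, F) k := by
    intro X Y f k
    rw [ContinuousLinearMap.sub_apply, lp.coeFn_sub]; rfl
  constructor
  · intro f
    constructor
    · rw [hsub, comp_apply, comp_apply, hadjV₂ (V₁ f) 0, hV₁0 f, hV₁n f 0,
        hV₁0 (adjoint V₂ f), hadjV₂ f 0]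
      simp only [ContinuousLinearMap.sub_apply, ContinuousLinearMap.one_apply,
        map_add, map_sub]
      abel
    · intro n
      rw [hsub, comp_apply, comp_apply, hadjV₂ (V₁ f) (n + 1), hV₁n f n, hV₁n f (n + 1),
        hV₁n (adjoint V₂ f) n, hadjV₂ f n, hadjV₂ f (n + 1)]
      simp only [ContinuousLinearMap.sub_apply, ContinuousLinearMap.one_apply,
        map_add, map_sub]
      abel
  · -- the equivalence
    have hPin : ∀ a b : F, ⟪P a, b⟫_ℂ = ⟪a, P b⟫_ℂ := by
      intro a b
      conv_lhs => rw [← hPadj]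
      rw [adjoint_inner_left]
    have hQin : ∀ a b : F, ⟪(1 - P) a, b⟫_ℂ = ⟪a, (1 - P) b⟫_ℂ := by
      intro a b
      conv_lhs => rw [← hQadj]
      rw [adjoint_inner_left]
    have inner_sym : ∀ v y : F, ⟪P (U ((1 - P) v)), y⟫_ℂ
        = ⟪v, (1 - P) (adjoint U (P y))⟫_ℂ := by
      intro v y
      rw [hPin, ← adjoint_inner_right U, hQin]
    have hUU : ∀ w : F, U (adjoint U w) = w := by
      intro w
      have := ContinuousLinearMap.ext_iff.mp hU₂ w
      simpa using this
    constructor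
    · intro h
      have key : ∀ x : F, (1 - P) (adjoint U (P x)) = 0 := by
        intro x
        set s : lp (fun _ : ℕ => F) 2 := lp.single 2 0 x with hs
        have happ : V₂ (adjoint V₁ s) = adjoint V₁ (V₂ s) := by
          rw [← comp_apply V₂ (adjoint V₁), ← comp_apply (adjoint V₁) V₂, h]
        have heq : (V₂ (adjoint V₁ s) : ∀ _ : ℕ, F) 0 = (adjoint V₁ (V₂ s) : ∀ _ : ℕ, F) 0 := by
          rw [happ]
        rw [hV₂0 (adjoint V₁ s), hadjV₁ s 0,
          hadjV₁ (V₂ s) 0, hV₂0 s, hV₂n s 0] at heq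
        have h1 : (lp.single 2 0 x : ∀ _ : ℕ, F) (0 + 1) = 0 :=
          by simp [lp.single_apply]
        rw [hs, lp.single_apply_self, h1] at heq
        simp only [map_zero, add_zero, zero_add, map_add] at heq
        have h0 : adjoint U ((1 - P) (adjoint U (P x))) = 0 := by
          have := (right_eq_add).mp heq
          exact this
        have := congrArg U h0
        rw [hUU, map_zero] at this
        exact this
      ext z
      have hz : P (U ((1 - P) z)) = 0 := by
        apply ext_inner_right ℂ
        intro y
        rw [inner_sym, key y, inner_zero_right, inner_zero_left]
      simpa [comp_apply] using hz
    · intro h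
      have hball : ∀ z : F, P (U ((1 - P) z)) = 0 := by
        intro z
        have := ContinuousLinearMap.ext_iff.mp h z
        simpa [comp_apply] using this
      have key : ∀ x : F, (1 - P) (adjoint U (P x)) = 0 := by
        intro x
        apply ext_inner_left ℂ
        intro v
        rw [← inner_sym, hball v, inner_zero_left, inner_zero_right]
      ext f k
      cases k with
      | zero =>
        rw [comp_apply, comp_apply, hV₂0 (adjoint V₁ f), hadjV₁ f 0,
          hadjV₁ (V₂ f) 0, hV₂0 f, hV₂n f 0, key]
        simp only [map_add, map_zero, zero_add]
        abel
      | succ n =>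
        rw [comp_apply, comp_apply, hV₂n (adjoint V₁ f) n, hadjV₁ f n, hadjV₁ f (n + 1),
          hadjV₁ (V₂ f) (n + 1), hV₂n f n, hV₂n f (n + 1)]
        simp only [ContinuousLinearMap.sub_apply, ContinuousLinearMap.one_apply,
          map_add, map_sub]
        abel
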